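/- arXiv:2603.00278 — 8 statements merged into one kernel-verified Lean document; each statement's English description precedes it below -/
import Mathlib

section
/- Let m, n be positive integers. Define γ as the permutation of {0,1,...,mn−1} taking the row-major dealing of an m×n grid to the column-major dealing, i.e., γ(ni+j) = mj+i for 0 ≤ i < m, 0 ≤ j < n. Then the sign of γ equals (−1)^(C(m,2)·C(n,2)). -/
open Equiv Equiv.Perm Finset

private lemma mySign_eq_signAux {N : ℕ} (f : Equiv.Perm (Fin N)) :
    Equiv.Perm.sign f = Equiv.Perm.signAux f := by
  rcases lt_or_ge N 2 with h | h
  · haveI : Subsingleton (Fin N) := Fin.subsingleton_iff_le_one.mpr (by omega)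
    have hf : f = 1 := Equiv.ext fun x => Subsingleton.elim _ _
    subst hf
    rw [map_one, Equiv.Perm.signAux_one]
  · haveI : Nontrivial (Fin N) := Fin.nontrivial_iff_two_le.mpr h
    let s : Equiv.Perm (Fin N) →* ℤˣ :=
      MonoidHom.mk' Equiv.Perm.signAux Equiv.Perm.signAux_mul
    have hs : Function.Surjective s := by
      intro a
      rcases Int.units_eq_one_or a with rfl | rfl
      · exact ⟨1, Equiv.Perm.signAux_one N⟩
      · obtain ⟨x, y, hxy⟩ := exists_pair_ne (Fin N)
        exact ⟨Equiv.swap x y, Equiv.Perm.signAux_swap hxy⟩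
    rw [← Equiv.Perm.eq_sign_of_surjective_hom hs]
    rfl

private lemma card_lt_pairs (k : ℕ) :
    (Finset.univ.filter fun p : Fin k × Fin k => p.1 < p.2).card = k.choose 2 := by
  rw [← Fintype.card_subtype]
  have e : {p : Fin k × Fin k // p.1 < p.2} ≃ Σ j : Fin k, Fin j.val :=
    { toFun := fun p => ⟨p.1.2, ⟨p.1.1.val, p.2⟩⟩
      invFun := fun x => ⟨(⟨x.2.val, lt_trans x.2.isLt x.1.isLt⟩, x.1), x.2.isLt⟩
      left_inv := fun p => by ext <;> rfl
      right_inv := fun x => by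
        rcases x with ⟨j, i⟩
        rfl }
  rw [Fintype.card_congr e, Fintype.card_sigma]
  simp only [Fintype.card_fin]
  rw [Fin.sum_univ_eq_sum_range (fun i => i) k, Finset.sum_range_id, Nat.choose_two_right]

private lemma decomp_lemma {m n i1 j1 i2 j2 : ℕ} (hj1 : j1 < n) (hj2 : j2 < n)
    (hi1 : i1 < m) (hi2 : i2 < m)
    (h1 : n * i2 + j2 < n * i1 + j1) (h2 : m * j1 + i1 ≤ m * j2 + i2) :
    i2 < i1 ∧ j1 < j2 := by
  have hji : j1 ≤ j2 := by
    by_contra hcon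
    push_neg at hcon
    have h3 : m * j2 + m ≤ m * j1 := by
      have := Nat.mul_le_mul_left m (Nat.succ_le_of_lt hcon)
      simpa [Nat.mul_succ] using this
    have h4 : m * j2 + m ≤ m * j2 + i2 :=
      le_trans h3 (le_trans (Nat.le_add_right _ _) h2)
    exact absurd (le_of_add_le_add_left h4) (not_le.mpr hi2)
  have hij : i2 ≤ i1 := by
    by_contra hcon
    push_neg at hcon
    have h3 : n * i1 + n ≤ n * i2 := by
      have := Nat.mul_le_mul_left n (Nat.succ_le_of_lt hcon)
      simpa [Nat.mul_succ] using this
    have h4 : n * i1 + n ≤ n * i1 + j1 :=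
      le_trans h3 (le_trans (Nat.le_add_right _ _) (le_of_lt h1))
    exact absurd (le_of_add_le_add_left h4) (not_le.mpr hj1)
  have hjne : j1 ≠ j2 := by
    intro hje
    rw [← hje] at h1 h2
    have hle' : i1 ≤ i2 := le_of_add_le_add_left h2
    have h5 : n * i2 < n * i1 := lt_of_add_lt_add_right h1
    have h6 : i2 < i1 := Nat.lt_of_mul_lt_mul_left h5
    omega
  have hine : i1 ≠ i2 := by
    intro hie
    rw [← hie] at h1
    exact absurd (lt_of_add_lt_add_left h1) (not_lt.mpr hji)
  exact ⟨lt_of_le_of_ne hij (fun h => hine h.symm), lt_of_le_of_ne hji hjne⟩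

private lemma comp_lemma {m n i1 j1 i2 j2 : ℕ} (hj1 : j1 < n) (hj2 : j2 < n)
    (hi1 : i1 < m) (hi2 : i2 < m) (hi : i2 < i1) (hj : j1 < j2) :
    n * i2 + j2 < n * i1 + j1 ∧ m * j1 + i1 ≤ m * j2 + i2 := by
  constructor
  · have h3 : n * i2 + n ≤ n * i1 := by
      have := Nat.mul_le_mul_left n (Nat.succ_le_of_lt hi)
      simpa [Nat.mul_succ] using this
    calc n * i2 + j2 < n * i2 + n := by omega
      _ ≤ n * i1 := h3
      _ ≤ n * i1 + j1 := Nat.le_add_right _ _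
  · have h3 : m * j1 + m ≤ m * j2 := by
      have := Nat.mul_le_mul_left m (Nat.succ_le_of_lt hj)
      simpa [Nat.mul_succ] using this
    calc m * j1 + i1 ≤ m * j1 + m := by omega
      _ ≤ m * j2 := h3
      _ ≤ m * j2 + i2 := Nat.le_add_right _ _

/-- The permutation γ of {0,...,mn-1} taking the row-major deal of an m×n grid to the
column-major deal, i.e. γ(n*i+j) = m*j+i, has sign (-1)^(C(m,2)·C(n,2)). -/
theorem stmt_0 (m n : ℕ) (hm : 0 < m) (hn : 0 < n)
    (γ : Equiv.Perm (Fin (m * n)))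
    (hγ : ∀ i j : ℕ, i < m → j < n → ∀ h : n * i + j < m * n,
      ((γ ⟨n * i + j, h⟩ : Fin (m * n)) : ℕ) = m * j + i) :
    Equiv.Perm.sign γ = (-1 : ℤˣ) ^ (m.choose 2 * n.choose 2) := by
  -- general formula for γ
  have hγ' : ∀ x : Fin (m * n), (γ x : ℕ) = m * ((x : ℕ) % n) + (x : ℕ) / n := by
    intro x
    have hi : (x : ℕ) / n < m := (Nat.div_lt_iff_lt_mul hn).mpr x.isLt
    have hj : (x : ℕ) % n < n := Nat.mod_lt _ hn
    have hx : n * ((x : ℕ) / n) + (x : ℕ) % n = (x : ℕ) := Nat.div_add_mod _ _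
    have hlt : n * ((x : ℕ) / n) + (x : ℕ) % n < m * n := by rw [hx]; exact x.isLt
    have := hγ _ _ hi hj hlt
    have hfin : (⟨n * ((x : ℕ) / n) + (x : ℕ) % n, hlt⟩ : Fin (m * n)) = x := Fin.ext hx
    rwa [hfin] at this
  rw [mySign_eq_signAux γ]
  have hdef : Equiv.Perm.signAux γ =
      ∏ x ∈ Equiv.Perm.finPairsLT (m * n), if γ x.1 ≤ γ x.2 then (-1 : ℤˣ) else 1 := rfl
  rw [hdef, Finset.prod_ite, Finset.prod_const, Finset.prod_const, one_pow, mul_one]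
  congr 1
  -- cardinality of the set of "inversions"
  have hNlt : ∀ (i : Fin m) (j : Fin n), n * (i : ℕ) + (j : ℕ) < m * n := by
    intro i j
    calc n * (i : ℕ) + (j : ℕ) < n * (i : ℕ) + n := by omega
      _ = n * ((i : ℕ) + 1) := by ring
      _ ≤ n * m := Nat.mul_le_mul_left n i.isLt
      _ = m * n := Nat.mul_comm n m
  have key : ((Equiv.Perm.finPairsLT (m * n)).filter fun x => γ x.1 ≤ γ x.2).card =
      ((Finset.univ.filter fun p : Fin m × Fin m => p.1 < p.2) ×ˢ
        (Finset.univ.filter fun q : Fin n × Fin n => q.1 < q.2)).card := by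
    refine Finset.card_bij'
      (fun a _ => ((⟨(a.2 : ℕ) / n, (Nat.div_lt_iff_lt_mul hn).mpr a.2.isLt⟩,
                    ⟨(a.1 : ℕ) / n, (Nat.div_lt_iff_lt_mul hn).mpr a.1.isLt⟩),
                   (⟨(a.1 : ℕ) % n, Nat.mod_lt _ hn⟩,
                    ⟨(a.2 : ℕ) % n, Nat.mod_lt _ hn⟩)))
      (fun b _ => ⟨⟨n * (b.1.2 : ℕ) + (b.2.1 : ℕ), hNlt b.1.2 b.2.1⟩,
        ⟨n * (b.1.1 : ℕ) + (b.2.2 : ℕ), hNlt b.1.1 b.2.2⟩⟩)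
      ?_ ?_ ?_ ?_
    · -- forward membership
      intro a ha
      rw [Finset.mem_filter, Equiv.Perm.mem_finPairsLT] at ha
      obtain ⟨hlt, hle⟩ := ha
      rw [Fin.lt_def] at hlt
      rw [Fin.le_def] at hle
      have h1 : (γ a.1 : ℕ) ≤ (γ a.2 : ℕ) := hle
      rw [hγ' a.1, hγ' a.2] at h1
      have h2 : n * ((a.2 : ℕ) / n) + (a.2 : ℕ) % n < n * ((a.1 : ℕ) / n) + (a.1 : ℕ) % n := by
        rw [Nat.div_add_mod, Nat.div_add_mod]; exact hlt
      have hd := decomp_lemma (Nat.mod_lt _ hn) (Nat.mod_lt (a.2 : ℕ) hn)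
        ((Nat.div_lt_iff_lt_mul hn).mpr a.1.isLt) ((Nat.div_lt_iff_lt_mul hn).mpr a.2.isLt)
        h2 h1
      simp only [Finset.mem_product, Finset.mem_filter, Finset.mem_univ, true_and]
      exact ⟨hd.1, hd.2⟩
    · -- backward membership
      intro b hb
      simp only [Finset.mem_product, Finset.mem_filter, Finset.mem_univ, true_and] at hb
      obtain ⟨hbi, hbj⟩ := hb
      have hc := comp_lemma b.2.1.isLt b.2.2.isLt b.1.2.isLt b.1.1.isLt hbi hbj
      rw [Finset.mem_filter, Equiv.Perm.mem_finPairsLT]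
      constructor
      · rw [Fin.lt_def]
        exact hc.1
      · rw [Fin.le_def]
        have e1 : (γ ⟨n * (b.1.2 : ℕ) + (b.2.1 : ℕ), hNlt b.1.2 b.2.1⟩ : ℕ) =
            m * (b.2.1 : ℕ) + (b.1.2 : ℕ) :=
          hγ _ _ b.1.2.isLt b.2.1.isLt _
        have e2 : (γ ⟨n * (b.1.1 : ℕ) + (b.2.2 : ℕ), hNlt b.1.1 b.2.2⟩ : ℕ) =
            m * (b.2.2 : ℕ) + (b.1.1 : ℕ) :=
          hγ _ _ b.1.1.isLt b.2.2.isLt _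
        rw [e1, e2]
        exact hc.2
    · -- left inverse
      intro a ha
      obtain ⟨a1, a2⟩ := a
      exact Sigma.ext (Fin.ext (Nat.div_add_mod _ _))
        (heq_of_eq (Fin.ext (Nat.div_add_mod _ _)))
    · -- right inverse
      intro b hb
      have hdiv : ∀ i j : ℕ, j < n → (n * i + j) / n = i := fun i j hj => by
        rw [Nat.mul_add_div hn, Nat.div_eq_of_lt hj, Nat.add_zero]
      have hmod : ∀ i j : ℕ, j < n → (n * i + j) % n = j := fun i j hj => by
        rw [Nat.mul_add_mod, Nat.mod_eq_of_lt hj]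
      obtain ⟨⟨b11, b12⟩, ⟨b21, b22⟩⟩ := b
      refine Prod.ext (Prod.ext ?_ ?_) (Prod.ext ?_ ?_) <;> simp only
      · exact Fin.ext (hdiv _ _ b22.isLt)
      · exact Fin.ext (hdiv _ _ b21.isLt)
      · exact Fin.ext (hmod _ _ b21.isLt)
      · exact Fin.ext (hmod _ _ b22.isLt)
  rw [key, Finset.card_product, card_lt_pairs, card_lt_pairs]
end

section
/- Let m, n be odd positive integers and γ the permutation of {0,...,mn−1} with γ(ni+j) = mj+i. Then sign(γ) = (−1)^((m−1)(n−1)/4). -/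
open Equiv Equiv.Perm Finset

private lemma sign_eq_signAux' {k : ℕ} (f : Equiv.Perm (Fin k)) :
    Equiv.Perm.sign f = Equiv.Perm.signAux f := by
  refine Equiv.Perm.swap_induction_on f ?_ (fun g x y hxy ih => ?_)
  · simp [Equiv.Perm.signAux_one]
  · rw [Equiv.Perm.sign_mul, Equiv.Perm.signAux_mul, ih,
      Equiv.Perm.sign_swap hxy, Equiv.Perm.signAux_swap hxy]

private lemma div_mod_unique' {n i j i2 j2 : ℕ} (hj : j < n) (hj2 : j2 < n)
    (h : n * i + j = n * i2 + j2) : i = i2 ∧ j = j2 := by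
  have h1 : (n * i + j) % n = j := by rw [Nat.mul_add_mod, Nat.mod_eq_of_lt hj]
  have h2 : (n * i2 + j2) % n = j2 := by rw [Nat.mul_add_mod, Nat.mod_eq_of_lt hj2]
  have hjj : j = j2 := by rw [← h1, ← h2, h]
  subst hjj
  have hnn : n * i = n * i2 := by omega
  have hn0 : 0 < n := by omega
  exact ⟨Nat.eq_of_mul_eq_mul_left hn0 hnn, rfl⟩

private lemma card_finPairsLT (k : ℕ) :
    (Equiv.Perm.finPairsLT k).card = k * (k - 1) / 2 := by
  rw [Equiv.Perm.finPairsLT, Finset.card_sigma]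
  have h : ∀ a : Fin k, ((Finset.range (a : ℕ)).attachFin
      (fun _ hm => (Finset.mem_range.1 hm).trans a.2)).card = (a : ℕ) := by
    intro a
    rw [Finset.card_attachFin, Finset.card_range]
  simp_rw [h]
  rw [Fin.sum_univ_eq_sum_range (fun i => i) k, Finset.sum_range_id]

private lemma key_ineq {m n i j i' j' : ℕ} (hi : i < m) (hi' : i' < m) (hj : j < n)
    (hj' : j' < n) (hba : n * i' + j' < n * i + j) (hg : m * j + i ≤ m * j' + i') :
    i' < i ∧ j < j' := by
  have hjlt : j < j' := by
    have hle : j ≤ j' := by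
      by_contra hcon
      push_neg at hcon
      have h1 : m * (j' + 1) ≤ m * j := Nat.mul_le_mul_left m hcon
      rw [Nat.mul_succ] at h1
      omega
    rcases Nat.lt_or_ge j j' with h | h
    · exact h
    · exfalso
      have hjj : j = j' := le_antisymm hle h
      subst hjj
      have hii : i ≤ i' := by omega
      have h2 : n * i ≤ n * i' := Nat.mul_le_mul_left n hii
      omega
  refine ⟨?_, hjlt⟩
  by_contra hcon
  push_neg at hcon
  have h2 : n * i ≤ n * i' := Nat.mul_le_mul_left n hcon
  omega

/-- For odd positive m, n, the permutation γ with γ(n*i+j) = m*j+i has sign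
(-1)^((m-1)(n-1)/4). -/
theorem stmt_2 (m n : ℕ) (hm : Odd m) (hn : Odd n) (hm0 : 0 < m) (hn0 : 0 < n)
    (γ : Equiv.Perm (Fin (m * n)))
    (hγ : ∀ i j : ℕ, i < m → j < n → ∀ h : n * i + j < m * n,
      ((γ ⟨n * i + j, h⟩ : Fin (m * n)) : ℕ) = m * j + i) :
    Equiv.Perm.sign γ = (-1 : ℤˣ) ^ ((m - 1) * (n - 1) / 4) := by
  -- value of γ at any point, via div/mod
  have key : ∀ x : Fin (m * n), ((γ x : Fin (m * n)) : ℕ) = m * ((x : ℕ) % n) + (x : ℕ) / n := by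
    intro x
    have hd : (x : ℕ) / n < m := by
      rw [Nat.div_lt_iff_lt_mul hn0]
      exact x.2
    have hmo : (x : ℕ) % n < n := Nat.mod_lt _ hn0
    have hx : n * ((x : ℕ) / n) + (x : ℕ) % n = (x : ℕ) := Nat.div_add_mod _ n
    have h : n * ((x : ℕ) / n) + (x : ℕ) % n < m * n := by rw [hx]; exact x.2
    have := hγ ((x : ℕ) / n) ((x : ℕ) % n) hd hmo h
    rwa [show (⟨n * ((x : ℕ) / n) + (x : ℕ) % n, h⟩ : Fin (m * n)) = x from Fin.ext hx] at this
  have hbound : ∀ i j : ℕ, i < m → j < n → n * i + j < m * n := by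
    intro i j hi hj
    calc n * i + j < n * (i + 1) := by rw [Nat.mul_succ]; omega
    _ ≤ n * m := Nat.mul_le_mul_left n hi
    _ = m * n := mul_comm n m
  -- sign equals (-1)^(number of inversions)
  have hsign : Equiv.Perm.sign γ =
      (-1 : ℤˣ) ^ ((Equiv.Perm.finPairsLT (m * n)).filter (fun x => γ x.1 ≤ γ x.2)).card := by
    rw [sign_eq_signAux', Equiv.Perm.signAux, Finset.prod_ite, Finset.prod_const,
      Finset.prod_const, one_pow, mul_one]
  -- count inversions
  have hcard : ((Equiv.Perm.finPairsLT (m * n)).filter (fun x => γ x.1 ≤ γ x.2)).card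
      = ((Equiv.Perm.finPairsLT m) ×ˢ (Equiv.Perm.finPairsLT n)).card := by
    symm
    refine Finset.card_bij
      (fun p _ => ⟨⟨n * (p.1.1 : ℕ) + (p.2.2 : ℕ), hbound _ _ p.1.1.2 p.2.2.2⟩,
        ⟨n * (p.1.2 : ℕ) + (p.2.1 : ℕ), hbound _ _ p.1.2.2 p.2.1.2⟩⟩) ?_ ?_ ?_
    · -- membership
      rintro ⟨⟨i, i'⟩, ⟨j', j⟩⟩ hp
      rw [Finset.mem_product, Equiv.Perm.mem_finPairsLT, Equiv.Perm.mem_finPairsLT] at hp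
      obtain ⟨hii, hjj⟩ := hp
      have hii' : (i' : ℕ) < i := hii
      have hjj' : (j : ℕ) < j' := hjj
      rw [Finset.mem_filter, Equiv.Perm.mem_finPairsLT]
      constructor
      · -- second component < first component
        show (⟨n * (i' : ℕ) + (j' : ℕ), _⟩ : Fin (m * n)) < ⟨n * (i : ℕ) + (j : ℕ), _⟩
        rw [Fin.lt_def]
        show n * (i' : ℕ) + (j' : ℕ) < n * (i : ℕ) + (j : ℕ)
        have h1 : n * ((i' : ℕ) + 1) ≤ n * (i : ℕ) := Nat.mul_le_mul_left n hii'
        rw [Nat.mul_succ] at h1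
        have := j'.2
        omega
      · -- γ inequality
        rw [Fin.le_def, key, key]
        simp only
        have e1 : (n * (i : ℕ) + (j : ℕ)) % n = (j : ℕ) := by
          rw [Nat.mul_add_mod, Nat.mod_eq_of_lt j.2]
        have e2 : (n * (i : ℕ) + (j : ℕ)) / n = (i : ℕ) := by
          rw [Nat.mul_add_div hn0, Nat.div_eq_of_lt j.2, Nat.add_zero]
        have e3 : (n * (i' : ℕ) + (j' : ℕ)) % n = (j' : ℕ) := by
          rw [Nat.mul_add_mod, Nat.mod_eq_of_lt j'.2]
        have e4 : (n * (i' : ℕ) + (j' : ℕ)) / n = (i' : ℕ) := by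
          rw [Nat.mul_add_div hn0, Nat.div_eq_of_lt j'.2, Nat.add_zero]
        rw [e1, e2, e3, e4]
        have h1 : m * ((j : ℕ) + 1) ≤ m * (j' : ℕ) := Nat.mul_le_mul_left m hjj'
        rw [Nat.mul_succ] at h1
        have := i.2
        omega
    · -- injectivity
      rintro ⟨⟨i, i'⟩, ⟨j', j⟩⟩ h1 ⟨⟨i2, i2'⟩, ⟨j2', j2⟩⟩ h2 heq
      simp only [Sigma.mk.inj_iff, Fin.mk.injEq, heq_eq_eq] at heq
      obtain ⟨ha, hb⟩ := heq
      obtain ⟨e1, e2⟩ := div_mod_unique' j.2 j2.2 ha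
      obtain ⟨e3, e4⟩ := div_mod_unique' j'.2 j2'.2 hb
      have hI : i = i2 := Fin.ext e1
      have hI' : i' = i2' := Fin.ext e3
      have hJ : j = j2 := Fin.ext e2
      have hJ' : j' = j2' := Fin.ext e4
      subst hI; subst hI'; subst hJ; subst hJ'
      rfl
    · -- surjectivity
      rintro ⟨a, b⟩ hb
      rw [Finset.mem_filter, Equiv.Perm.mem_finPairsLT] at hb
      obtain ⟨hba, hγab⟩ := hb
      change b < a at hba
      change γ a ≤ γ b at hγab
      rw [Fin.le_def, key, key] at hγab
      have hba' : (b : ℕ) < (a : ℕ) := hba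
      have hi : (a : ℕ) / n < m := by
        rw [Nat.div_lt_iff_lt_mul hn0]
        exact a.2
      have hi' : (b : ℕ) / n < m := by
        rw [Nat.div_lt_iff_lt_mul hn0]
        exact b.2
      have hj : (a : ℕ) % n < n := Nat.mod_lt _ hn0
      have hj' : (b : ℕ) % n < n := Nat.mod_lt _ hn0
      have ha : n * ((a : ℕ) / n) + (a : ℕ) % n = (a : ℕ) := Nat.div_add_mod _ n
      have hb' : n * ((b : ℕ) / n) + (b : ℕ) % n = (b : ℕ) := Nat.div_add_mod _ n
      have hba2 : n * ((b : ℕ) / n) + (b : ℕ) % n < n * ((a : ℕ) / n) + (a : ℕ) % n := by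
        omega
      obtain ⟨hilt, hjlt⟩ := key_ineq hi hi' hj hj' hba2 hγab
      refine ⟨⟨⟨⟨(a : ℕ) / n, hi⟩, ⟨(b : ℕ) / n, hi'⟩⟩,
        ⟨⟨(b : ℕ) % n, hj'⟩, ⟨(a : ℕ) % n, hj⟩⟩⟩, ?_, ?_⟩
      · rw [Finset.mem_product, Equiv.Perm.mem_finPairsLT, Equiv.Perm.mem_finPairsLT]
        exact ⟨hilt, hjlt⟩
      · exact Sigma.ext (Fin.ext ha) (heq_of_eq (Fin.ext hb'))
  -- compute cardinalities and parity
  obtain ⟨a, hma⟩ := hm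
  obtain ⟨b, hbn⟩ := hn
  have hcm : m * (m - 1) / 2 = (2 * a + 1) * a := by
    subst hma
    have h : (2 * a + 1) * (2 * a + 1 - 1) = ((2 * a + 1) * a) * 2 := by
      rw [Nat.add_sub_cancel]; ring
    rw [h, Nat.mul_div_cancel _ (by norm_num)]
  have hcn : n * (n - 1) / 2 = (2 * b + 1) * b := by
    subst hbn
    have h : (2 * b + 1) * (2 * b + 1 - 1) = ((2 * b + 1) * b) * 2 := by
      rw [Nat.add_sub_cancel]; ring
    rw [h, Nat.mul_div_cancel _ (by norm_num)]
  have hexp : (m - 1) * (n - 1) / 4 = a * b := by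
    subst hma; subst hbn
    have h : (2 * a + 1 - 1) * (2 * b + 1 - 1) = (a * b) * 4 := by
      rw [Nat.add_sub_cancel, Nat.add_sub_cancel]; ring
    rw [h, Nat.mul_div_cancel _ (by norm_num)]
  rw [hsign, hcard, Finset.card_product, card_finPairsLT, card_finPairsLT, hcm, hcn, hexp]
  rw [Int.units_pow_eq_pow_mod_two, Int.units_pow_eq_pow_mod_two (-1) (a * b)]
  congr 1
  have e1 : (2 * a + 1) * a ≡ 1 * a [MOD 2] := Nat.ModEq.mul_right a (by unfold Nat.ModEq; omega)
  have e2 : (2 * b + 1) * b ≡ 1 * b [MOD 2] := Nat.ModEq.mul_right b (by unfold Nat.ModEq; omega)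
  have e3 : (2 * a + 1) * a * ((2 * b + 1) * b) ≡ 1 * a * (1 * b) [MOD 2] := e1.mul e2
  simpa [Nat.ModEq] using e3
end

section
/- Let m, n be coprime odd positive integers. Define α as the permutation of {0,...,mn−1} taking the row deal to the diagonal deal: for 0 ≤ i < m, 0 ≤ j < n, α(ni+j) is the unique element t of {0,...,mn−1} with t ≡ i (mod m) and t ≡ j (mod n). Then sign(α) equals the sign of the permutation of Z/mZ given by multiplication by n. -/
lemma sign_addRight_eq_one (m : ℕ) [NeZero m] (hm : Odd m) (a : ZMod m) :
    Equiv.Perm.sign (Equiv.addRight a : Equiv.Perm (ZMod m)) = 1 := by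
  have h2 : Nat.Coprime 2 m := (Nat.prime_two.coprime_iff_not_dvd).2 (by
    simpa [Nat.two_dvd_ne_zero] using Nat.odd_iff.mp hm)
  set u2 : (ZMod m)ˣ := ZMod.unitOfCoprime 2 h2 with hu2
  have hu2c : (u2 : ZMod m) = 2 := by simp [hu2, ZMod.coe_unitOfCoprime]
  set b : ZMod m := ((u2⁻¹ : (ZMod m)ˣ) : ZMod m) * a with hb
  have hab : a = b + b := by
    have : (u2 : ZMod m) * b = a := by
      rw [hb, ← mul_assoc, ← Units.val_mul, mul_inv_cancel, Units.val_one, one_mul]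
    rw [← this, hu2c, two_mul]
  have hsplit : (Equiv.addRight a : Equiv.Perm (ZMod m))
      = (Equiv.addRight b) * (Equiv.addRight b) := by
    ext x
    simp [hab, Equiv.Perm.mul_apply, add_assoc]
  rw [hsplit, map_mul, ← sq, Int.units_sq]

/-- For coprime odd positive m, n, the permutation α of {0,...,mn-1} taking the row deal
to the diagonal deal (α(n*i+j) ≡ i mod m and ≡ j mod n) has sign equal to the sign of the
permutation of ℤ/mℤ given by multiplication by n. -/
theorem stmt_4 (m n : ℕ) (hm : Odd m) (hn : Odd n) (hm0 : 0 < m) (hn0 : 0 < n)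
    (hco : Nat.Coprime m n)
    (α : Equiv.Perm (Fin (m * n)))
    (hα : ∀ i j : ℕ, i < m → j < n → ∀ h : n * i + j < m * n,
      ((α ⟨n * i + j, h⟩ : Fin (m * n)) : ℕ) % m = i ∧
      ((α ⟨n * i + j, h⟩ : Fin (m * n)) : ℕ) % n = j) :
    haveI : NeZero m := ⟨hm0.ne'⟩
    ∀ σ : Equiv.Perm (ZMod m), (∀ x, σ x = (n : ZMod m) * x) →
      Equiv.Perm.sign α = Equiv.Perm.sign σ := by
  haveI : NeZero m := ⟨hm0.ne'⟩
  intro σ hσ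
  -- the unit n of ZMod m
  set u : (ZMod m)ˣ := ZMod.unitOfCoprime n hco.symm with hu
  have huc : (u : ZMod m) = (n : ZMod m) := ZMod.coe_unitOfCoprime n hco.symm
  have hσu : σ = MulAction.toPerm u := by
    ext x
    simp [hσ x, MulAction.toPerm, Units.smul_def, huc]
  -- equivalence Fin m ≃ ZMod m
  set z : Fin m ≃ ZMod m :=
    { toFun := fun a => (a : ℕ)
      invFun := fun x => ⟨x.val, ZMod.val_lt x⟩
      left_inv := fun a => by
        ext
        simp [ZMod.val_natCast, Nat.mod_eq_of_lt a.isLt]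
      right_inv := fun x => by simp [ZMod.natCast_val, ZMod.cast_id] } with hz
  -- fiberwise permutations
  set τ : Fin n → Equiv.Perm (ZMod m) := fun j =>
    (Equiv.subRight ((j : ℕ) : ZMod m)).trans (MulAction.toPerm u).symm with hτ
  set σf : Fin n → Equiv.Perm (Fin m) := fun j => (z.symm.permCongr (τ j)) with hσf
  set f : Equiv.Perm (Fin m × Fin n) := Equiv.prodCongrLeft σf with hf
  have hkey : α = finProdFinEquiv.permCongr f := by
    rw [Equiv.ext_iff]
    intro t
    obtain ⟨⟨i, j⟩, rfl⟩ := finProdFinEquiv.surjective t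
    have hval : (finProdFinEquiv (i, j) : ℕ) = n * i + j := by
      simp [finProdFinEquiv_apply_val, add_comm]
    have hlt : n * (i : ℕ) + j < m * n := by
      rw [← hval]; exact (finProdFinEquiv (i, j)).isLt
    have hfin : finProdFinEquiv (i, j) = ⟨n * (i : ℕ) + j, hlt⟩ := Fin.ext hval
    obtain ⟨h1, h2⟩ := hα i j i.isLt j.isLt hlt
    set t' := α ⟨n * (i : ℕ) + j, hlt⟩ with ht'
    rw [hfin]
    -- RHS
    have hR : finProdFinEquiv.permCongr f ⟨n * (i : ℕ) + j, hlt⟩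
        = finProdFinEquiv (σf j i, j) := by
      rw [← hfin]
      simp [Equiv.permCongr_apply, hf, Equiv.prodCongrLeft_apply]
    rw [hR]
    -- it suffices to compare values
    apply Fin.ext
    rw [finProdFinEquiv_apply_val]
    -- use t' % n = j, and the ZMod m computation for t' / n
    have hdecomp : (t' : ℕ) = n * ((t' : ℕ) / n) + j := by
      conv_lhs => rw [← Nat.div_add_mod (t' : ℕ) n]
      rw [h2]
    have hdivlt : (t' : ℕ) / n < m := by
      apply Nat.div_lt_of_lt_mul
      rw [mul_comm n m]
      exact t'.isLt
    -- ZMod computation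
    have hzmod : (((t' : ℕ) / n : ℕ) : ZMod m) = τ j ((i : ℕ) : ZMod m) := by
      have e1 : ((t' : ℕ) : ZMod m) = ((i : ℕ) : ZMod m) := by
        conv_lhs => rw [← Nat.mod_add_div (t' : ℕ) m]
        push_cast
        simp [h1]
      have e2 : ((t' : ℕ) : ZMod m)
          = (n : ZMod m) * (((t' : ℕ) / n : ℕ) : ZMod m) + ((j : ℕ) : ZMod m) := by
        conv_lhs => rw [hdecomp]
        push_cast
        ring
      have e3 : (u : ZMod m) * (((t' : ℕ) / n : ℕ) : ZMod m)
          = ((i : ℕ) : ZMod m) - ((j : ℕ) : ZMod m) := by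
        rw [huc]
        rw [e1] at e2
        linear_combination -e2
      have := congrArg (fun x => ((u⁻¹ : (ZMod m)ˣ) : ZMod m) * x) e3
      rw [← mul_assoc, ← Units.val_mul, inv_mul_cancel, Units.val_one, one_mul] at this
      rw [this]
      simp [hτ, Equiv.subRight, MulAction.toPerm, Units.smul_def]
    have hσfval : ((σf j i : Fin m) : ℕ) = (t' : ℕ) / n := by
      have : (σf j i : Fin m) = ⟨(t' : ℕ) / n, hdivlt⟩ := by
        simp only [hσf, Equiv.permCongr_apply, Equiv.symm_symm]
        apply z.injective
        rw [Equiv.apply_symm_apply]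
        exact hzmod.symm
      rw [this]
    rw [← ht']
    show (t' : ℕ) = (j : ℕ) + n * ((σf j i : Fin m) : ℕ)
    rw [hσfval]
    omega
  rw [hkey, Equiv.Perm.sign_permCongr, hf, Equiv.Perm.sign_prodCongrLeft]
  have hτs : ∀ j, Equiv.Perm.sign (σf j) = Equiv.Perm.sign σ := by
    intro j
    rw [hσf]
    simp only [Equiv.Perm.sign_permCongr]
    have : τ j = (MulAction.toPerm u).symm * (Equiv.subRight ((j : ℕ) : ZMod m)) := rfl
    rw [this, map_mul]
    have hsub : (Equiv.subRight ((j : ℕ) : ZMod m)) = Equiv.addRight (-((j : ℕ) : ZMod m)) := by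
      ext x; simp [sub_eq_add_neg]
    rw [hsub, sign_addRight_eq_one m hm, mul_one]
    have : (MulAction.toPerm u : Equiv.Perm (ZMod m)).symm = (MulAction.toPerm u)⁻¹ := rfl
    rw [this, map_inv, hσu, Int.units_inv_eq_self]
  rw [Finset.prod_congr rfl (fun j _ => hτs j), Finset.prod_const]
  simp only [Finset.card_univ, Fintype.card_fin]
  obtain ⟨k, rfl⟩ := hn
  rw [pow_add, pow_mul, Int.units_sq, one_pow, one_mul, pow_one]
end

section
/- Let p be an odd prime. The map a ↦ [a/p], sending a unit a of Z/pZ to the sign of the permutation of Z/pZ given by multiplication by a, is a surjective group homomorphism from (Z/pZ)× to {±1}. -/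
/-- For an odd prime p, the map sending a unit a of ℤ/pℤ to the sign of the permutation
x ↦ a·x of ℤ/pℤ is a surjective group homomorphism onto {±1} = ℤˣ. -/
theorem stmt_7 (p : ℕ) (hp : p.Prime) (hodd : Odd p) :
    haveI : Fact p.Prime := ⟨hp⟩
    (∀ a b : (ZMod p)ˣ,
        Equiv.Perm.sign (MulAction.toPerm (a * b) : Equiv.Perm (ZMod p)) =
          Equiv.Perm.sign (MulAction.toPerm a : Equiv.Perm (ZMod p)) *
            Equiv.Perm.sign (MulAction.toPerm b : Equiv.Perm (ZMod p))) ∧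
      Function.Surjective
        (fun a : (ZMod p)ˣ =>
          Equiv.Perm.sign (MulAction.toPerm a : Equiv.Perm (ZMod p))) := by
  haveI : Fact p.Prime := ⟨hp⟩
  constructor
  · intro a b
    rw [show (MulAction.toPerm (a * b) : Equiv.Perm (ZMod p)) =
        MulAction.toPerm a * MulAction.toPerm b from
      map_mul (MulAction.toPermHom (ZMod p)ˣ (ZMod p)) a b, map_mul]
  · -- surjectivity
    have h2 : 2 < p := lt_of_le_of_ne hp.two_le (by
      rintro rfl; exact (Nat.not_odd_iff_even.mpr (by decide)) hodd)
    obtain ⟨g, hg⟩ := IsCyclic.exists_generator (α := (ZMod p)ˣ)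
    have hcard : Fintype.card (ZMod p)ˣ = p - 1 := by
      rw [ZMod.card_units_eq_totient p, Nat.totient_prime hp]
    have hg1 : g ≠ 1 := by
      intro h
      have h1 : orderOf g = Nat.card (ZMod p)ˣ := orderOf_eq_card_of_forall_mem_zpowers hg
      rw [h, orderOf_one, Nat.card_eq_fintype_card, hcard] at h1
      omega
    set σ : Equiv.Perm (ZMod p) := MulAction.toPerm g with hσ
    have hσ_apply : ∀ x : ZMod p, σ x = (g : ZMod p) * x := fun x => rfl
    have hσpow : ∀ (n : ℤ) (x : ZMod p), (σ ^ n) x = ((g ^ n : (ZMod p)ˣ) : ZMod p) * x := by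
      intro n x
      have : (σ ^ n) = MulAction.toPerm (g ^ n) :=
        (map_zpow (MulAction.toPermHom (ZMod p)ˣ (ZMod p)) g n).symm
      rw [this]; rfl
    have hmem : ∀ x : ZMod p, σ x ≠ x ↔ x ≠ 0 := by
      intro x
      constructor
      · intro h h0; apply h; rw [h0, hσ_apply, mul_zero]
      · intro hx h
        rw [hσ_apply] at h
        have : (g : ZMod p) = 1 := by
          have h' : (g : ZMod p) * x = 1 * x := by rw [h, one_mul]
          exact mul_right_cancel₀ hx h'
        exact hg1 (Units.ext this)
    have hcyc : σ.IsCycle := by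
      refine ⟨(1 : ZMod p), ?_, ?_⟩
      · rw [hmem]; exact one_ne_zero
      · intro y hy
        have hy0 : y ≠ 0 := (hmem y).mp hy
        obtain ⟨u, rfl⟩ := isUnit_iff_ne_zero.mpr hy0
        obtain ⟨n, hn⟩ := Subgroup.mem_zpowers_iff.mp (hg u)
        exact ⟨n, by rw [hσpow, hn, mul_one]⟩
    have hsupp : σ.support = Finset.univ \ {0} := by
      ext x
      simp [Equiv.Perm.mem_support, hmem x]
    have hcardsupp : σ.support.card = p - 1 := by
      rw [hsupp, Finset.card_sdiff_of_subset (by simp), Finset.card_univ, ZMod.card,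
        Finset.card_singleton]
    have hsign : Equiv.Perm.sign σ = -1 := by
      rw [hcyc.sign, hcardsupp]
      have : Even (p - 1) := Nat.Odd.sub_odd hodd odd_one
      rw [this.neg_one_pow]
    intro s
    rcases Int.units_eq_one_or s with rfl | rfl
    · refine ⟨1, ?_⟩
      have : (MulAction.toPerm (1 : (ZMod p)ˣ) : Equiv.Perm (ZMod p)) = 1 :=
        map_one (MulAction.toPermHom (ZMod p)ˣ (ZMod p))
      simp [this]
    · exact ⟨g, hsign⟩
end

section
/- Zolotarev's Lemma: Let p be an odd prime and a an integer not divisible by p. The sign of the permutation of Z/pZ given by multiplication by a equals the Legendre symbol (a/p). -/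
section Aux

variable {p : ℕ} [Fact p.Prime]

lemma aux_sign_gen (hodd : Odd p) (g : (ZMod p)ˣ)
    (hg : ∀ u : (ZMod p)ˣ, u ∈ Subgroup.zpowers g) :
    Equiv.Perm.sign (MulAction.toPermHom (ZMod p)ˣ (ZMod p) g) = -1 := by
  have hp2 : p ≠ 2 := by rintro rfl; exact (Nat.not_odd_iff_even.mpr (by decide)) hodd
  have hcard : Fintype.card (ZMod p)ˣ = p - 1 := ZMod.card_units_eq_totient p ▸
    Nat.totient_prime (Fact.out)
  have hp3 : 3 ≤ p := by
    rcases (Fact.out : p.Prime).two_le.lt_or_eq with h | h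
    · omega
    · exact absurd h.symm hp2
  have hord : orderOf g = p - 1 := by
    rw [orderOf_eq_card_of_forall_mem_zpowers hg, Nat.card_eq_fintype_card, hcard]
  have hgne : (g : ZMod p) ≠ 1 := by
    intro h
    have : g = 1 := Units.ext (by simpa using h)
    rw [this, orderOf_one] at hord; omega
  set σ : Equiv.Perm (ZMod p) := MulAction.toPermHom (ZMod p)ˣ (ZMod p) g with hσ
  have hσapp : ∀ x : ZMod p, σ x = (g : ZMod p) * x := fun x => rfl
  have hmoves : ∀ x : ZMod p, σ x ≠ x ↔ x ≠ 0 := by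
    intro x
    constructor
    · rintro h rfl; exact h (by simp [hσapp])
    · intro hx h
      rw [hσapp] at h
      have : ((g : ZMod p) - 1) * x = 0 := by rw [sub_mul, one_mul, h, sub_self]
      rcases mul_eq_zero.mp this with h' | h'
      · exact hgne (by linear_combination h')
      · exact hx h'
  have hcyc : σ.IsCycle := by
    refine ⟨1, (hmoves 1).mpr one_ne_zero, fun y hy => ?_⟩
    have hy0 : y ≠ 0 := (hmoves y).mp hy
    obtain ⟨v, hv⟩ := IsUnit.exists_left_inv (Ne.isUnit hy0).unit.isUnit
    -- get unit with coe y
    have : IsUnit y := Ne.isUnit hy0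
    obtain ⟨u, rfl⟩ := this
    obtain ⟨n, hn⟩ := hg u
    have hn' : g ^ n = u := hn
    refine ⟨n, ?_⟩
    have : σ ^ n = MulAction.toPermHom (ZMod p)ˣ (ZMod p) (g ^ n) := by
      rw [hσ, map_zpow]
    rw [this]
    show ((g ^ n : (ZMod p)ˣ) : ZMod p) * 1 = (u : ZMod p)
    rw [hn', mul_one]
  have hsupp : σ.support = {(0 : ZMod p)}ᶜ := by
    ext x
    simp [Equiv.Perm.mem_support, hmoves x]
  have hsuppcard : σ.support.card = p - 1 := by
    rw [hsupp, Finset.card_compl, Finset.card_singleton, ZMod.card]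
  rw [hcyc.sign, hsuppcard]
  have heven : Even (p - 1) := Nat.Odd.sub_odd hodd odd_one
  rw [heven.neg_one_pow]

end Aux

/-- Zolotarev's Lemma: for an odd prime p and an integer a not divisible by p, the sign of
the permutation of ℤ/pℤ given by multiplication by a equals the Legendre symbol (a/p). -/
theorem stmt_8 (p : ℕ) (hp : p.Prime) (hodd : Odd p) (a : ℤ) (ha : ¬ (p : ℤ) ∣ a) :
    haveI : Fact p.Prime := ⟨hp⟩
    ∀ σ : Equiv.Perm (ZMod p), (∀ x, σ x = (a : ZMod p) * x) →
      (Equiv.Perm.sign σ : ℤ) = legendreSym p a := by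
  haveI : Fact p.Prime := ⟨hp⟩
  intro σ hσ
  have ha0 : (a : ZMod p) ≠ 0 := fun h => ha ((ZMod.intCast_zmod_eq_zero_iff_dvd a p).mp h)
  obtain ⟨u, hu⟩ := Ne.isUnit ha0
  -- the two homomorphisms
  let φ : (ZMod p)ˣ →* ℤˣ :=
    (Equiv.Perm.sign).comp (MulAction.toPermHom (ZMod p)ˣ (ZMod p))
  let ψ : (ZMod p)ˣ →* ℤˣ := (quadraticChar (ZMod p)).toUnitHom
  obtain ⟨g, hg⟩ := IsCyclic.exists_generator (α := (ZMod p)ˣ)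
  have hp2 : p ≠ 2 := by rintro rfl; exact (Nat.not_odd_iff_even.mpr (by decide)) hodd
  have hcard : Fintype.card (ZMod p)ˣ = p - 1 := ZMod.card_units_eq_totient p ▸
    Nat.totient_prime hp
  have hord : orderOf g = p - 1 := by
    rw [orderOf_eq_card_of_forall_mem_zpowers hg, Nat.card_eq_fintype_card, hcard]
  -- generator is not a square
  have hgns : ¬ IsSquare ((g : ZMod p)) := by
    intro hs
    have hpow : ((g : ZMod p)) ^ (p / 2) = 1 :=
      (ZMod.euler_criterion p (Units.ne_zero g)).mp hs
    have hpow' : g ^ (p / 2) = 1 := Units.ext (by push_cast [Units.val_pow_eq_pow_val]; exact hpow)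
    have hdvd : orderOf g ∣ p / 2 := orderOf_dvd_of_pow_eq_one hpow'
    rw [hord] at hdvd
    have hpm : p % 2 = 1 := Nat.odd_iff.mp hodd
    have hple := hp.two_le
    have h1 : p / 2 < p - 1 := by omega
    have h2 : 0 < p / 2 := by omega
    exact absurd (Nat.le_of_dvd h2 hdvd) (by omega)
  have hψg : ψ g = -1 := by
    apply Units.ext
    rw [MulChar.coe_toUnitHom]
    simpa using quadraticChar_neg_one_iff_not_isSquare.mpr hgns
  have hφg : φ g = -1 := aux_sign_gen hodd g hg
  have key : φ u = ψ u := by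
    obtain ⟨n, hn⟩ := hg u
    rw [← hn, map_zpow, map_zpow, hφg, hψg]
  -- σ is the permutation given by u
  have hσeq : σ = MulAction.toPermHom (ZMod p)ˣ (ZMod p) u := by
    ext x
    rw [hσ]
    show (a : ZMod p) * x = (u : ZMod p) * x
    rw [hu]
  have : (Equiv.Perm.sign σ : ℤˣ) = ψ u := by rw [hσeq]; exact key
  have hψu : ((ψ u : ℤˣ) : ℤ) = legendreSym p a := by
    rw [show ((ψ u : ℤˣ) : ℤ) = quadraticChar (ZMod p) (u : ZMod p) from
      MulChar.coe_toUnitHom _ u, hu]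
    rfl
  rw [this, hψu]
end

section
/- Let n, m be coprime odd positive integers. The sign of the permutation of Z/mZ given by multiplication by n equals the Jacobi symbol (n/m). -/
open Equiv Equiv.Perm

private def zperm {m : ℕ} (u : (ZMod m)ˣ) : Equiv.Perm (ZMod m) := MulAction.toPerm u

private lemma zperm_apply {m : ℕ} (u : (ZMod m)ˣ) (x : ZMod m) : zperm u x = ↑u * x := rfl

private lemma zperm_pow {m : ℕ} (u : (ZMod m)ˣ) (k : ℕ) : zperm (u ^ k) = zperm u ^ k :=
  map_pow (MulAction.toPermHom _ (ZMod m)) u k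

private lemma int_units_pow_odd (u : ℤˣ) {k : ℕ} (hk : Odd k) : u ^ k = u := by
  rcases Int.units_eq_one_or u with rfl | rfl
  · exact one_pow k
  · exact hk.neg_one_pow

private lemma int_units_eq_one_of_pow_odd {u : ℤˣ} {k : ℕ} (hk : Odd k) (h : u ^ k = 1) :
    u = 1 := by rw [← int_units_pow_odd u hk, h]

private lemma sign_addLeft {b : ℕ} [NeZero b] (hb : Odd b) (c : ZMod b) :
    Equiv.Perm.sign (Equiv.addLeft c) = 1 := by
  have key : ∀ k : ℕ, (Equiv.addLeft c) ^ k = Equiv.addLeft ((k : ZMod b) * c) := by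
    intro k
    induction k with
    | zero => ext x; simp
    | succ k ih =>
      ext x
      rw [pow_succ, Equiv.Perm.mul_apply, ih]
      push_cast
      simp [Equiv.addLeft, add_mul, add_assoc]
  have hb1 : ((Equiv.addLeft c) ^ b : Equiv.Perm (ZMod b)) = 1 := by
    rw [key b, ZMod.natCast_self, zero_mul]
    ext x; simp
  apply int_units_eq_one_of_pow_odd hb
  rw [← map_pow, hb1, map_one]


private lemma natCast_val_self {m : ℕ} [NeZero m] (x : ZMod m) : (x.val : ZMod m) = x := by
  simp [ZMod.natCast_val, ZMod.cast_id]

private def splitE (a b : ℕ) [NeZero a] [NeZero b] : ZMod (a * b) ≃ ZMod a × ZMod b where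
  toFun x := ((x.val : ZMod a), ((x.val / a : ℕ) : ZMod b))
  invFun rq := ((rq.1.val + a * rq.2.val : ℕ) : ZMod (a * b))
  left_inv x := by
    have hx : x.val < a * b := ZMod.val_lt x
    have hq : x.val / a < b := Nat.div_lt_of_lt_mul hx
    show (((x.val : ZMod a).val + a * (((x.val / a : ℕ) : ZMod b)).val : ℕ) : ZMod (a * b)) = x
    rw [ZMod.val_natCast, ZMod.val_natCast, Nat.mod_eq_of_lt hq, Nat.mod_add_div]
    exact natCast_val_self x
  right_inv rq := by
    obtain ⟨r, q⟩ := rq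
    have ha : 0 < a := Nat.pos_of_ne_zero (NeZero.ne a)
    have hr : r.val < a := ZMod.val_lt r
    have hq : q.val < b := ZMod.val_lt q
    have hlt : r.val + a * q.val < a * b := by
      calc r.val + a * q.val < a + a * q.val := by omega
        _ = a * (q.val + 1) := by ring
        _ ≤ a * b := Nat.mul_le_mul_left a hq
    have hval : ((r.val + a * q.val : ℕ) : ZMod (a * b)).val = r.val + a * q.val := by
      rw [ZMod.val_natCast, Nat.mod_eq_of_lt hlt]
    show ((((r.val + a * q.val : ℕ) : ZMod (a * b)).val : ZMod a),
        ((((r.val + a * q.val : ℕ) : ZMod (a * b)).val / a : ℕ) : ZMod b)) = (r, q)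
    rw [hval, Prod.mk.injEq]
    constructor
    · push_cast
      rw [natCast_val_self, ZMod.natCast_self]
      ring
    · rw [Nat.add_mul_div_left _ _ ha, Nat.div_eq_of_lt hr, zero_add]
      exact natCast_val_self q

private lemma splitE_conj (n a b : ℕ) [NeZero a] [NeZero b] (x : ZMod (a * b)) :
    splitE a b ((n : ZMod (a * b)) * x) =
      (((n : ZMod a) * (x.val : ZMod a)),
        (((n * (x.val : ZMod a).val) / a : ℕ) : ZMod b)
          + (n : ZMod b) * ((x.val / a : ℕ) : ZMod b)) := by
  have ha : 0 < a := Nat.pos_of_ne_zero (NeZero.ne a)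
  have hval : ((n : ZMod (a * b)) * x).val = (n * x.val) % (a * b) := by
    have h1 : (n : ZMod (a * b)) * x = ((n * x.val : ℕ) : ZMod (a * b)) := by
      push_cast
      rw [natCast_val_self]
    rw [h1, ZMod.val_natCast]
  have hrv : (x.val : ZMod a).val = x.val % a := ZMod.val_natCast _ _
  show ((((n : ZMod (a * b)) * x).val : ZMod a),
      (((((n : ZMod (a * b)) * x).val / a : ℕ)) : ZMod b)) = _
  rw [Prod.mk.injEq]
  constructor
  · rw [hval]
    rw [(ZMod.natCast_eq_natCast_iff _ _ _).mpr
      ((Nat.mod_mod_of_dvd (n * x.val) ⟨b, rfl⟩ : (n * x.val) % (a*b) % a = _) :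
        (n * x.val) % (a * b) ≡ n * x.val [MOD a])]
    push_cast
    rfl
  · rw [hval, hrv]
    rw [show ((n * (x.val % a) / a : ℕ) : ZMod b) + (n : ZMod b) * ((x.val / a : ℕ) : ZMod b)
        = ((n * (x.val % a) / a + n * (x.val / a) : ℕ) : ZMod b) by push_cast; ring]
    apply (ZMod.natCast_eq_natCast_iff _ _ _).mpr
    set k := n * x.val with hk
    have e1 : k / a = k % (a * b) / a + b * (k / (a * b)) := by
      conv_lhs => rw [← Nat.mod_add_div k (a * b)]
      rw [show k % (a*b) + a * b * (k / (a*b)) = k % (a*b) + a * (b * (k / (a*b))) by ring,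
        Nat.add_mul_div_left _ _ ha]
    have e2 : k / a = n * (x.val % a) / a + n * (x.val / a) := by
      conv_lhs => rw [hk, show n * x.val = n * (x.val % a) + a * (n * (x.val / a)) by
        conv_lhs => rw [← Nat.mod_add_div x.val a]
        ring]
      rw [Nat.add_mul_div_left _ _ ha]
    have : k % (a * b) / a + b * (k / (a * b)) ≡ k % (a*b) / a [MOD b] := by
      exact Nat.add_mul_mod_self_left _ b _
    calc k % (a * b) / a ≡ k % (a * b) / a + b * (k / (a * b)) [MOD b] := this.symm
      _ = k / a := e1.symm
      _ = n * (x.val % a) / a + n * (x.val / a) := e2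

private lemma sign_split (n a b : ℕ) [NeZero a] [NeZero b] (ha : Odd a) (hb : Odd b)
    (hab : n.Coprime (a * b)) (hA : n.Coprime a) (hB : n.Coprime b) :
    Equiv.Perm.sign (zperm (ZMod.unitOfCoprime n hab)) =
      Equiv.Perm.sign (zperm (ZMod.unitOfCoprime n hA)) *
        Equiv.Perm.sign (zperm (ZMod.unitOfCoprime n hB)) := by
  set fA := zperm (ZMod.unitOfCoprime n hA) with hfA
  set fB := zperm (ZMod.unitOfCoprime n hB) with hfB
  set t : ZMod a → ZMod b := fun r => ((n * r.val / a : ℕ) : ZMod b) with ht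
  set g : ZMod a → Equiv.Perm (ZMod b) := fun r => Equiv.addLeft (t r) * fB with hg
  set P : Equiv.Perm (ZMod a × ZMod b) :=
    (Equiv.prodCongr fA (Equiv.refl (ZMod b))) * (Equiv.prodCongrRight g) with hP
  have hconj : (splitE a b).permCongr (zperm (ZMod.unitOfCoprime n hab)) = P := by
    apply Equiv.ext
    intro rq
    obtain ⟨x, rfl⟩ := (splitE a b).surjective rq
    rw [Equiv.permCongr_apply, Equiv.symm_apply_apply, zperm_apply, ZMod.coe_unitOfCoprime,
      splitE_conj]
    show _ = (Equiv.prodCongr fA (Equiv.refl (ZMod b))) ((Equiv.prodCongrRight g) _)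
    rw [Equiv.prodCongrRight_apply]
    show _ = (fA ((splitE a b) x).1, (g ((splitE a b) x).1) ((splitE a b) x).2)
    have h1 : ((splitE a b) x).1 = (x.val : ZMod a) := rfl
    have h2 : ((splitE a b) x).2 = ((x.val / a : ℕ) : ZMod b) := rfl
    rw [h1, h2, hg]
    show _ = (fA (x.val : ZMod a),
      (Equiv.addLeft (t (x.val : ZMod a))) (fB ((x.val / a : ℕ) : ZMod b)))
    rw [hfA, hfB, zperm_apply, zperm_apply, ZMod.coe_unitOfCoprime, ZMod.coe_unitOfCoprime, ht]
    rfl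
  have hsign : Equiv.Perm.sign (zperm (ZMod.unitOfCoprime n hab)) = Equiv.Perm.sign P := by
    rw [← hconj, Equiv.Perm.sign_permCongr]
  rw [hsign, hP, map_mul]
  have hs1 : Equiv.Perm.sign (Equiv.prodCongr fA (Equiv.refl (ZMod b))) =
      Equiv.Perm.sign fA := by
    have : Equiv.prodCongr fA (Equiv.refl (ZMod b)) =
        Equiv.prodCongrLeft (fun _ : ZMod b => fA) := by
      apply Equiv.ext; rintro ⟨r, q⟩; rfl
    rw [this, Equiv.Perm.sign_prodCongrLeft]
    rw [Finset.prod_const, Finset.card_univ, ZMod.card]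
    exact int_units_pow_odd _ hb
  have hs2 : Equiv.Perm.sign (Equiv.prodCongrRight g) = Equiv.Perm.sign fB := by
    rw [Equiv.Perm.sign_prodCongrRight]
    have : ∀ r : ZMod a, Equiv.Perm.sign (g r) = Equiv.Perm.sign fB := by
      intro r
      rw [hg]
      show Equiv.Perm.sign (Equiv.addLeft (t r) * fB) = _
      rw [map_mul, sign_addLeft hb, one_mul]
    rw [Finset.prod_congr rfl fun r _ => this r, Finset.prod_const, Finset.card_univ, ZMod.card]
    exact int_units_pow_odd _ ha
  rw [hs1, hs2]

private lemma key_prime (p : ℕ) (hp : p.Prime) (hp2 : p ≠ 2) (n : ℕ) (h : n.Coprime p) :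
    haveI : NeZero p := ⟨hp.pos.ne'⟩
    ((Equiv.Perm.sign (zperm (ZMod.unitOfCoprime n h)) : ℤˣ) : ℤ) = jacobiSym (n : ℤ) p := by
  haveI : Fact p.Prime := ⟨hp⟩
  haveI : NeZero p := ⟨hp.pos.ne'⟩
  have hodd : Odd p := hp.odd_of_ne_two hp2
  have hp3 : 3 ≤ p := by
    rcases hp.two_le.lt_or_eq with h' | h'
    · omega
    · omega
  have heven : Even (p - 1) := Nat.Odd.sub_odd hodd odd_one
  have hcard : Fintype.card (ZMod p)ˣ = p - 1 := ZMod.card_units p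
  obtain ⟨g, hg⟩ := IsCyclic.exists_generator (α := (ZMod p)ˣ)
  have horder : orderOf g = p - 1 := by
    rw [orderOf_eq_card_of_forall_mem_zpowers hg, Nat.card_eq_fintype_card, hcard]
  have hgne1 : g ≠ 1 := by
    intro hg1
    rw [hg1, orderOf_one] at horder
    omega
  -- sign of zperm g is -1
  have hfix : ∀ x : ZMod p, zperm g x = x ↔ x = 0 := by
    intro x
    rw [zperm_apply]
    constructor
    · intro hx
      by_contra hx0
      apply hgne1
      apply Units.ext
      have := mul_right_cancel₀ hx0 (by rw [hx, one_mul] : (g : ZMod p) * x = 1 * x)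
      simpa using this
    · intro hx0; rw [hx0, mul_zero]
  have hcycle : (zperm g).IsCycle := by
    refine ⟨1, ?_, ?_⟩
    · rw [zperm_apply, mul_one]
      intro hg1
      exact hgne1 (Units.ext (by simpa using hg1))
    · intro y hy
      have hy0 : y ≠ 0 := fun h0 => hy ((hfix y).mpr h0)
      obtain ⟨v, rfl⟩ : IsUnit y := IsUnit.mk0 y hy0
      obtain ⟨j, hj⟩ : ∃ j : ℕ, g ^ j = v :=
        (mem_powers_iff_mem_zpowers.mpr (hg v)).imp fun j hj => hj
      refine ⟨(j : ℤ), ?_⟩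
      rw [zpow_natCast, ← zperm_pow, zperm_apply, hj, mul_one]
  have hsupp : (zperm g).support = {(0 : ZMod p)}ᶜ := by
    ext x
    simp only [Equiv.Perm.mem_support, Finset.mem_compl, Finset.mem_singleton]
    exact not_congr (hfix x)
  have hsigng : Equiv.Perm.sign (zperm g) = -1 := by
    rw [hcycle.sign, hsupp, Finset.card_compl, Finset.card_singleton, ZMod.card,
      heven.neg_one_pow]
  -- legendre symbol of g is -1
  have hnsq : ¬ IsSquare ((g : ZMod p)) := by
    rintro ⟨s, hs⟩
    have hs0 : s ≠ 0 := by
      rintro rfl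
      rw [mul_zero] at hs
      exact g.ne_zero hs
    obtain ⟨w, rfl⟩ : IsUnit s := IsUnit.mk0 s hs0
    have hgw : g = w * w := Units.ext (by rw [Units.val_mul]; exact hs)
    have h2d : 2 ∣ p - 1 := heven.two_dvd
    have hpow : g ^ ((p - 1) / 2) = 1 := by
      rw [hgw, ← sq, ← pow_mul, Nat.mul_div_cancel' h2d, ← hcard]
      exact pow_card_eq_one
    have hdvd := orderOf_dvd_of_pow_eq_one hpow
    rw [horder] at hdvd
    have hhalfpos : 0 < (p - 1) / 2 := Nat.div_pos (by omega) (by omega)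
    have := Nat.le_of_dvd hhalfpos hdvd
    have := Nat.div_lt_self (show 0 < p - 1 by omega) (show 1 < 2 by omega)
    omega
  have hchi : quadraticChar (ZMod p) ((g : ZMod p)) = -1 :=
    (quadraticChar_neg_one_iff_not_isSquare).mpr hnsq
  -- put it together
  obtain ⟨k, hk⟩ : ∃ k : ℕ, g ^ k = ZMod.unitOfCoprime n h :=
    (mem_powers_iff_mem_zpowers.mpr (hg _)).imp fun j hj => hj
  rw [← jacobiSym.legendreSym.to_jacobiSym p (n : ℤ)]
  unfold legendreSym
  have hcast : (((n : ℤ) : ZMod p)) = ((g : ZMod p)) ^ k := by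
    push_cast
    rw [← ZMod.coe_unitOfCoprime n h, ← hk, Units.val_pow_eq_pow_val]
  rw [hcast, map_pow, hchi, ← hk, zperm_pow, map_pow, hsigng]
  push_cast
  ring

private lemma key : ∀ (m : ℕ), Odd m → ∀ (_ : NeZero m) (n : ℕ) (h : n.Coprime m),
    ((Equiv.Perm.sign (zperm (ZMod.unitOfCoprime n h)) : ℤˣ) : ℤ) = jacobiSym (n : ℤ) m := by
  intro m
  induction m using Nat.strong_induction_on with
  | _ m ih =>
    intro hm inst n h
    rcases eq_or_ne m 1 with rfl | hm1
    · have h1 : zperm (ZMod.unitOfCoprime n h) = 1 := by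
        apply Equiv.ext; intro x; exact Subsingleton.elim _ _
      rw [h1, map_one, jacobiSym.one_right]
      rfl
    · set p := m.minFac with hpdef
      have hp : p.Prime := Nat.minFac_prime hm1
      have hdvd : p ∣ m := Nat.minFac_dvd m
      set k := m / p with hkdef
      have hmeq : m = p * k := (Nat.mul_div_cancel' hdvd).symm
      clear_value p k
      have hp2 : p ≠ 2 := by
        rintro rfl
        exact (Nat.not_even_iff_odd.mpr hm) ((even_iff_two_dvd).mpr hdvd)
      have hpodd : Odd p := hp.odd_of_ne_two hp2
      have hkodd : Odd k := by
        rcases Nat.even_or_odd k with hk | hk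
        · exact absurd (hmeq ▸ hk.mul_left p) (Nat.not_even_iff_odd.mpr hm)
        · exact hk
      have hk0 : k ≠ 0 := by
        intro h0; exact inst.out (by rw [hmeq, h0, mul_zero])
      haveI : NeZero p := ⟨hp.pos.ne'⟩
      haveI : NeZero k := ⟨hk0⟩
      rcases eq_or_ne k 1 with rfl | hk1
      · -- m = p is prime
        have hmp : m = p := by rw [hmeq, mul_one]
        subst hmp
        exact key_prime m hp hp2 n h
      · have hklt : k < m := by
          have := hp.two_le
          calc k < 2 * k := by omega
            _ ≤ p * k := Nat.mul_le_mul_right k hp.two_le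
            _ = m := hmeq.symm
        have hplt : p < m := by
          have hk2 : 2 ≤ k := by omega
          calc p < p * 2 := (lt_mul_iff_one_lt_right hp.pos).mpr one_lt_two
            _ ≤ p * k := Nat.mul_le_mul_left p hk2
            _ = m := hmeq.symm
        subst hmeq
        have hA : n.Coprime p := Nat.Coprime.coprime_dvd_right ⟨k, rfl⟩ h
        have hB : n.Coprime k := Nat.Coprime.coprime_dvd_right ⟨p, mul_comm p k⟩ h
        rw [sign_split n p k hpodd hkodd h hA hB, jacobiSym.mul_right (n : ℤ) p k,
          ← ih p hplt hpodd ⟨hp.pos.ne'⟩ n hA, ← ih k hklt hkodd ⟨hk0⟩ n hB]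
        push_cast
        ring

/-- For coprime odd positive n, m, the sign of multiplication by n on ℤ/mℤ equals the
Jacobi symbol (n/m). -/
theorem stmt_10 (n m : ℕ) (hn : Odd n) (hm : Odd m) (hn0 : 0 < n) (hm0 : 0 < m)
    (h : Nat.Coprime n m) :
    haveI : NeZero m := ⟨hm0.ne'⟩
    ∀ σ : Equiv.Perm (ZMod m), (∀ x, σ x = (n : ZMod m) * x) →
      (Equiv.Perm.sign σ : ℤ) = jacobiSym (n : ℤ) m := by
  haveI : NeZero m := ⟨hm0.ne'⟩
  intro σ hσ
  have hσ' : σ = zperm (ZMod.unitOfCoprime n h) := by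
    apply Equiv.ext
    intro x
    rw [hσ, zperm_apply, ZMod.coe_unitOfCoprime]
  rw [hσ']
  exact key m hm ⟨hm0.ne'⟩ n h
end

section
/- Let n ≥ 3 be odd and m = (n−1)/2. The permutation α of {1,...,n−1} taking the row deal of a 2×m grid to the zigzag deal equals multiplication by 2 modulo n on {1,...,n−1}; hence sign(α) = [2/n], the Zolotarev symbol. -/
/-- For odd n ≥ 3 and m = (n-1)/2, the permutation α of {1,...,n-1} (encoded as Fin (n-1)
via c ↦ c-1) taking the row deal of a 2×m grid to the zigzag deal equals multiplication
by 2 modulo n; hence sign α = [2/n], the sign of multiplication by 2 on ℤ/nℤ. -/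
theorem stmt_12 (n m : ℕ) (hn : Odd n) (hn3 : 3 ≤ n) (hm : m = (n - 1) / 2)
    (α : Equiv.Perm (Fin (n - 1)))
    (hα : ∀ i j : ℕ, i < 2 → j < m → ∀ h : m * i + j < n - 1,
      ((α ⟨m * i + j, h⟩ : Fin (n - 1)) : ℕ) = if i = 1 then 2 * j else 2 * j + 1) :
    haveI : NeZero n := ⟨by omega⟩
    (∀ x : Fin (n - 1),
        (((α x : Fin (n - 1)) : ℕ) + 1) % n = (2 * ((x : ℕ) + 1)) % n) ∧
      ∀ σ : Equiv.Perm (ZMod n), (∀ x, σ x = 2 * x) →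
        Equiv.Perm.sign α = Equiv.Perm.sign σ := by
  haveI : NeZero n := ⟨by omega⟩
  obtain ⟨k, hk⟩ := hn
  have hmk : m = k := by omega
  have hn1 : n - 1 = 2 * m := by omega
  have hm0 : 0 < m := by omega
  have key : ∀ x : Fin (n - 1),
      (((α x : Fin (n - 1)) : ℕ) + 1) % n = (2 * ((x : ℕ) + 1)) % n := by
    intro x
    have hx : (x : ℕ) < 2 * m := by omega
    set i := (x : ℕ) / m with hi
    set j := (x : ℕ) % m with hj
    have hi2 : i < 2 := by
      rw [hi]; exact Nat.div_lt_of_lt_mul (by omega)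
    have hjm : j < m := Nat.mod_lt _ hm0
    have hxij : m * i + j = (x : ℕ) := by
      rw [hi, hj]; exact Nat.div_add_mod _ _
    have hlt : m * i + j < n - 1 := by omega
    have := hα i j hi2 hjm hlt
    have hxe : (⟨m * i + j, hlt⟩ : Fin (n - 1)) = x := by
      ext; simp [hxij]
    rw [hxe] at this
    rw [this]
    interval_cases i
    · simp only [hxij.symm]
      norm_num
      have h2 : 2 * j + 1 + 1 = 2 * (j + 1) := by ring
      rw [h2]
    · simp only [hxij.symm]
      norm_num
      have h1 : 2 * (m + j + 1) = (2 * j + 1) + n := by omega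
      rw [h1, Nat.add_mod_right]
  refine ⟨key, ?_⟩
  intro σ hσ
  -- build the equivalence Fin (n-1) ≃ {z : ZMod n // z ≠ 0}
  have hval : ∀ x : Fin (n - 1), ((((x : ℕ) + 1 : ℕ) : ZMod n)).val = (x : ℕ) + 1 := by
    intro x
    exact ZMod.val_cast_of_lt (by omega)
  have hne : ∀ x : Fin (n - 1), (((x : ℕ) + 1 : ℕ) : ZMod n) ≠ 0 := by
    intro x h
    have := hval x
    rw [h, ZMod.val_zero] at this
    omega
  let g : Fin (n - 1) ≃ {z : ZMod n // z ≠ 0} :=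
    { toFun := fun x => ⟨(((x : ℕ) + 1 : ℕ) : ZMod n), hne x⟩
      invFun := fun z => ⟨z.val.val - 1, by
        have h1 : z.val.val < n := ZMod.val_lt z.val
        have h2 : z.val.val ≠ 0 := fun h => z.2 ((ZMod.val_eq_zero _).mp h)
        omega⟩
      left_inv := by
        intro x
        ext
        show (((x : ℕ) + 1 : ℕ) : ZMod n).val - 1 = (x : ℕ)
        rw [hval x]
        omega
      right_inv := by
        intro z
        have h2 : z.val.val ≠ 0 := fun h => z.2 ((ZMod.val_eq_zero _).mp h)
        ext
        simp only
        rw [Nat.sub_add_cancel (by omega)]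
        exact ZMod.natCast_rightInverse z.val
      }
  have hext : σ = α.extendDomain g := by
    ext z
    by_cases hz : z ≠ 0
    · have hz' : z = (g (g.symm ⟨z, hz⟩) : ZMod n) := by
        rw [Equiv.apply_symm_apply]
      rw [hz']
      rw [Equiv.Perm.extendDomain_apply_subtype α g (g (g.symm ⟨z, hz⟩)).2]
      set x := g.symm ⟨z, hz⟩ with hx
      have hgx : (g x : ZMod n) = (((x : ℕ) + 1 : ℕ) : ZMod n) := rfl
      have : (((g x : {z : ZMod n // z ≠ 0}) : ZMod n)) = (((x : ℕ) + 1 : ℕ) : ZMod n) := rfl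
      simp only [Subtype.coe_eta, Equiv.symm_apply_apply]
      rw [hσ]
      show 2 * (((x : ℕ) + 1 : ℕ) : ZMod n) = ((((α x : Fin (n-1)) : ℕ) + 1 : ℕ) : ZMod n)
      have := key x
      have hcast : ((((α x : Fin (n-1)) : ℕ) + 1 : ℕ) : ZMod n)
          = ((2 * ((x : ℕ) + 1) : ℕ) : ZMod n) := by
        rw [ZMod.natCast_eq_natCast_iff]
        exact this
      rw [hcast]
      push_cast
      ring
    · push_neg at hz
      subst hz
      rw [Equiv.Perm.extendDomain_apply_not_subtype α g (by simp)]
      rw [hσ, mul_zero]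
  rw [hext, Equiv.Perm.sign_extendDomain]
end

section
/- Let n ≥ 3 be odd. The sign of the permutation of Z/nZ given by multiplication by 2 equals (−1)^((n²−1)/8). -/
open Finset Equiv Equiv.Perm

private lemma aux_mod_sub {n x : ℕ} (h1 : n ≤ x) (h2 : x < 2 * n) : x % n = x - n := by
  rw [Nat.mod_eq_sub_mod h1, Nat.mod_eq_of_lt (by omega)]

private lemma aux_sign_eq_signAux {n : ℕ} (f : Equiv.Perm (Fin n)) :
    Equiv.Perm.sign f = Equiv.Perm.signAux f := by
  refine Equiv.Perm.swap_induction_on f ?_ ?_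
  · simp [Equiv.Perm.signAux_one]
  · intro f x y hxy ih
    rw [Equiv.Perm.sign_mul, Equiv.Perm.signAux_mul, ih, Equiv.Perm.sign_swap hxy,
      Equiv.Perm.signAux_swap hxy]

private lemma aux_key {m a b : ℕ} (ha : a < 2 * m + 1) (_hb : b < 2 * m + 1) :
    (b < a ∧ (2 * a) % (2 * m + 1) ≤ (2 * b) % (2 * m + 1)) ↔
      (m < a ∧ a - m ≤ b ∧ b ≤ m) := by
  have h2a : (2 * a) % (2 * m + 1) = if a ≤ m then 2 * a else 2 * a - (2 * m + 1) := by
    split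
    · exact Nat.mod_eq_of_lt (by omega)
    · exact aux_mod_sub (by omega) (by omega)
  have h2b : (2 * b) % (2 * m + 1) = if b ≤ m then 2 * b else 2 * b - (2 * m + 1) := by
    split
    · exact Nat.mod_eq_of_lt (by omega)
    · exact aux_mod_sub (by omega) (by omega)
  rw [h2a, h2b]
  split_ifs <;> omega

private lemma aux_gauss (m : ℕ) : (∑ i ∈ Finset.range m, (m - i)) * 2 = (m + 1) * m := by
  have h1 : ∑ j ∈ Finset.range m, (m - 1 - j + 1) = ∑ j ∈ Finset.range m, (j + 1) :=
    Finset.sum_range_reflect (fun j => j + 1) m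
  have h2 : ∑ j ∈ Finset.range m, (m - j) = ∑ j ∈ Finset.range m, (m - 1 - j + 1) :=
    Finset.sum_congr rfl fun j hj => by
      rw [Finset.mem_range] at hj; omega
  have h3 : ∑ j ∈ Finset.range (m + 1), j = ∑ j ∈ Finset.range m, (j + 1) := by
    rw [Finset.sum_range_succ' (fun j => j) m]; simp
  have h4 := Finset.sum_range_id_mul_two (m + 1)
  rw [h2, h1, ← h3]
  simpa using h4

/-- For odd n ≥ 3, the sign of multiplication by 2 on ℤ/nℤ equals (-1)^((n²-1)/8). -/
theorem stmt_13 (n : ℕ) (hn : Odd n) (hn3 : 3 ≤ n) :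
    haveI : NeZero n := ⟨by omega⟩
    ∀ σ : Equiv.Perm (ZMod n), (∀ x, σ x = 2 * x) →
      Equiv.Perm.sign σ = (-1 : ℤˣ) ^ ((n ^ 2 - 1) / 8) := by
  haveI : NeZero n := ⟨by omega⟩
  intro σ hσ
  obtain ⟨m, hm⟩ : ∃ m, n = 2 * m + 1 := by
    obtain ⟨k, hk⟩ := hn; exact ⟨k, by omega⟩
  have hm1 : 1 ≤ m := by omega
  -- the equivalence ZMod n ≃ Fin n
  let e : ZMod n ≃ Fin n :=
    { toFun := fun x => ⟨x.val, ZMod.val_lt x⟩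
      invFun := fun i => (i.val : ZMod n)
      left_inv := fun x => ZMod.natCast_rightInverse x
      right_inv := fun i => Fin.ext (by simp [ZMod.val_natCast, Nat.mod_eq_of_lt i.isLt]) }
  set g : Equiv.Perm (Fin n) := e.permCongr σ with hgdef
  have hsg : Equiv.Perm.sign g = Equiv.Perm.sign σ := Equiv.Perm.sign_permCongr e σ
  have htwo : ((2 : ZMod n)).val = 2 := by
    have : ((2 : ℕ) : ZMod n) = (2 : ZMod n) := by push_cast; ring
    rw [← this, ZMod.val_natCast, Nat.mod_eq_of_lt (by omega)]
  have hg : ∀ i : Fin n, (g i).val = (2 * i.val) % n := by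
    intro i
    have : g i = e (σ (e.symm i)) := rfl
    rw [this, hσ]
    show (2 * (e.symm i)).val = (2 * i.val) % n
    have hsymm : (e.symm i : ZMod n) = (i.val : ZMod n) := rfl
    rw [hsymm, ZMod.val_mul, htwo, ZMod.val_natCast, Nat.mod_eq_of_lt i.isLt]
  -- sign via signAux
  rw [← hsg, aux_sign_eq_signAux]
  unfold Equiv.Perm.signAux
  rw [Finset.prod_ite (fun _ => (-1 : ℤˣ)) (fun _ => (1 : ℤˣ)), Finset.prod_const,
    Finset.prod_const, one_pow, mul_one]
  set C := (Equiv.Perm.finPairsLT n).filter (fun x => g x.1 ≤ g x.2) with hC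
  have hmemC : ∀ x : Σ _ : Fin n, Fin n,
      x ∈ C ↔ (m < x.1.val ∧ x.1.val - m ≤ x.2.val ∧ x.2.val ≤ m) := by
    intro x
    rw [hC, Finset.mem_filter, Equiv.Perm.mem_finPairsLT]
    have h1 : (x.2 < x.1) ↔ x.2.val < x.1.val := Iff.rfl
    have h2 : (g x.1 ≤ g x.2) ↔ (g x.1).val ≤ (g x.2).val := Iff.rfl
    rw [h1, h2, hg, hg]
    have hk := aux_key (m := m) (a := x.1.val) (b := x.2.val) (hm ▸ x.1.isLt) (hm ▸ x.2.isLt)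
    rw [← hm] at hk
    exact hk
  -- count C
  set N : Finset (Σ _ : ℕ, ℕ) := (Finset.Ioo m n).sigma (fun a => Finset.Icc (a - m) m) with hN
  have hmemN : ∀ p : Σ _ : ℕ, ℕ,
      p ∈ N ↔ (m < p.1 ∧ p.1 < n ∧ p.1 - m ≤ p.2 ∧ p.2 ≤ m) := by
    intro p
    rw [hN, Finset.mem_sigma, Finset.mem_Ioo, Finset.mem_Icc]
    tauto
  have hcard : C.card = N.card := by
    apply Finset.card_bij (fun x _ => (⟨x.1.val, x.2.val⟩ : Σ _ : ℕ, ℕ))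
    · intro x hx
      rw [hmemC] at hx
      rw [hmemN]
      exact ⟨hx.1, x.1.isLt, hx.2.1, hx.2.2⟩
    · intro x hx y hy hxy
      have h1 : x.1.val = y.1.val := congrArg Sigma.fst hxy
      have h2 : x.2.val = y.2.val := by
        have := congrArg Sigma.snd hxy
        simpa using this
      exact Sigma.ext (Fin.ext h1) (heq_of_eq (Fin.ext h2))
    · intro p hp
      rw [hmemN] at hp
      refine ⟨⟨⟨p.1, hp.2.1⟩, ⟨p.2, by omega⟩⟩, ?_, rfl⟩
      rw [hmemC]
      exact ⟨hp.1, hp.2.2.1, hp.2.2.2⟩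
  have hNcard : N.card * 2 = (m + 1) * m := by
    rw [hN, Finset.card_sigma]
    have : ∀ a ∈ Finset.Ioo m n, (Finset.Icc (a - m) m).card = m + 1 - (a - m) := by
      intro a _; rw [Nat.card_Icc]
    rw [Finset.sum_congr rfl this]
    have heq : Finset.Ioo m n = Finset.Ico (m + 1) n := by
      rw [Finset.Ico_add_one_left_eq_Ioo]
    rw [heq, Finset.sum_Ico_eq_sum_range]
    have hrw : ∀ i ∈ Finset.range (n - (m + 1)), m + 1 - (m + 1 + i - m) = m - i := by
      intro i _; omega
    rw [Finset.sum_congr rfl hrw]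
    have hnm : n - (m + 1) = m := by omega
    rw [hnm]
    exact aux_gauss m
  rw [hcard]
  congr 1
  have hn2 : n ^ 2 = 4 * (m * m) + 4 * m + 1 := by rw [hm]; ring
  have h5 : N.card * 2 = m * m + m := by rw [hNcard]; ring
  omega
end
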